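/- Injectivity of the divided-power operator: for every integer m ≥ 1, the ℂ-linear map ω : F_m → F_{m−2} is injective. -/

import Mathlib

open scoped BigOperators

noncomputable section

/-- The ring `𝒟 = ℂ[t₁,t₃,t₅,…]`: variable `k : ℕ` stands for `t_{2k+1}`. -/
abbrev Dring : Type := MvPolynomial ℕ ℂ

/-- The series `∑_{k≥1} t_{2k-1} z^{2k-1}/(2k-1)`. -/
def genX : PowerSeries Dring :=
  PowerSeries.mk fun n =>
    if n % 2 = 1 then ((n : ℂ)⁻¹) • (MvPolynomial.X ((n - 1) / 2) : Dring) else 0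

/-- `T n` is the polynomial `T₋ₙ`, the `n`-th coefficient of `exp(genX) = ∑_j genX^j/j!`
(the sum may be truncated at `j = n` since `genX` has zero constant term). -/
def T (n : ℕ) : Dring :=
  ∑ j ∈ Finset.range (n + 1),
    ((j.factorial : ℂ)⁻¹) • (PowerSeries.coeff n (genX ^ j))

/-- Index of a basis vector of the fermionic Fock space: a pair `(R, S)` of finite
sets of modes; `k ∈ R` stands for the factor `b_{k+1}` and `k ∈ S` for `a_{k+1}`. -/
abbrev FockIdx : Type := Finset ℕ × Finset ℕ

/-- The full fermionic Fock space `⊕_m F_m`, with basis `FockIdx`. -/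
abbrev Fock : Type := FockIdx →₀ ℂ

/-- `𝒟 ⊗ (⊕_m F_m)`, a free `𝒟`-module with basis `FockIdx`. -/
abbrev DFock : Type := FockIdx →₀ Dring

def charge (x : FockIdx) : ℤ := (x.1.card : ℤ) - x.2.card

def fsingle (x : FockIdx) : Fock := Finsupp.single x 1

/-- `αₙ` (for `n = k+1`, `k : ℕ`): wedging with `a_{k+1}` with the Koszul sign `(-1)^{deg ξ}`. -/
def alpha (k : ℕ) : Fock →ₗ[ℂ] Fock :=
  Finsupp.lsum ℂ fun x => LinearMap.toSpanSingleton ℂ Fock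
    (if k ∈ x.2 then 0 else
      (((-1 : ℂ) ^ x.1.card) * ((-1 : ℂ) ^ (x.2.filter (· < k)).card)) •
        fsingle (x.1, insert k x.2))

/-- `βₙ` (for `n = k+1`): contraction with `b_{k+1}*`, with Koszul signs. -/
def beta (k : ℕ) : Fock →ₗ[ℂ] Fock :=
  Finsupp.lsum ℂ fun x => LinearMap.toSpanSingleton ℂ Fock
    (if k ∈ x.1 then ((-1 : ℂ) ^ (x.1.filter (· < k)).card) • fsingle (x.1.erase k, x.2)
     else 0)

/-- `ω = ∑_{n≥1} αₙ βₙ` (on each basis vector only finitely many terms are nonzero). -/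
def omega : Fock →ₗ[ℂ] Fock :=
  Finsupp.lsum ℂ fun x => LinearMap.toSpanSingleton ℂ Fock
    (∑ k ∈ x.1, alpha k (beta k (fsingle x)))

/-- The charge-`m` Fock space `F_m ⊆ Fock`. -/
def FockC (m : ℤ) : Submodule ℂ Fock := Finsupp.supported ℂ ℂ {x | charge x = m}

def dsingle (x : FockIdx) : DFock := Finsupp.single x 1

/-- `αₙ`, extended `𝒟`-linearly to `𝒟 ⊗ Fock`. -/
def dAlpha (k : ℕ) : DFock →ₗ[Dring] DFock :=
  Finsupp.lsum Dring fun x => LinearMap.toSpanSingleton Dring DFock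
    (if k ∈ x.2 then 0 else
      (((-1 : Dring) ^ x.1.card) * ((-1 : Dring) ^ (x.2.filter (· < k)).card)) •
        dsingle (x.1, insert k x.2))

/-- `βₙ`, extended `𝒟`-linearly to `𝒟 ⊗ Fock`. -/
def dBeta (k : ℕ) : DFock →ₗ[Dring] DFock :=
  Finsupp.lsum Dring fun x => LinearMap.toSpanSingleton Dring DFock
    (if k ∈ x.1 then ((-1 : Dring) ^ (x.1.filter (· < k)).card) • dsingle (x.1.erase k, x.2)
     else 0)

/-- `d = ∑_{n≥1} T₋₍₂ₙ₋₁₎ βₙ : 𝒟⊗F_m → 𝒟⊗F_{m-1}`. -/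
def dOp : DFock →ₗ[Dring] DFock :=
  Finsupp.lsum Dring fun x => LinearMap.toSpanSingleton Dring DFock
    (∑ k ∈ x.1, T (2 * k + 1) • dBeta k (dsingle x))

/-- `ω = ∑_{n≥1} αₙ βₙ`, extended `𝒟`-linearly. -/
def dOmega : DFock →ₗ[Dring] DFock :=
  Finsupp.lsum Dring fun x => LinearMap.toSpanSingleton Dring DFock
    (∑ k ∈ x.1, dAlpha k (dBeta k (dsingle x)))

/-- The charge-`m` part `𝒟 ⊗ F_m`, as a `𝒟`-submodule. -/
def DFockC (m : ℤ) : Submodule Dring DFock := Finsupp.supported Dring Dring {x | charge x = m}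


namespace OmegaAux

/-- coefficient of `ω` on a basis vector -/
def oc (R S : Finset ℕ) (k : ℕ) : ℂ :=
  (-1) ^ (R.filter (· < k)).card *
    ((-1) ^ (R.erase k).card * (-1) ^ (S.filter (· < k)).card)

/-- coefficient of the raising operator `τ` on a basis vector -/
def tc (R S : Finset ℕ) (l : ℕ) : ℂ :=
  (-1) ^ (R.filter (· < l)).card *
    ((-1) ^ R.card * (-1) ^ (S.filter (· < l)).card)

/-- the raising operator `τ = ∑ βₙᵀ αₙᵀ` (transpose of `ω`). -/
def tau : Fock →ₗ[ℂ] Fock :=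
  Finsupp.lsum ℂ fun x => LinearMap.toSpanSingleton ℂ Fock
    (∑ l ∈ x.2 \ x.1, tc x.1 x.2 l • fsingle (insert l x.1, x.2.erase l))

/-- the charge operator. -/
def chargeOp : Fock →ₗ[ℂ] Fock :=
  Finsupp.lsum ℂ fun x => LinearMap.toSpanSingleton ℂ Fock
    ((charge x : ℂ) • fsingle x)

lemma beta_fsingle (k : ℕ) (R S : Finset ℕ) :
    beta k (fsingle (R, S)) =
      if k ∈ R then ((-1 : ℂ) ^ (R.filter (· < k)).card) • fsingle (R.erase k, S)
      else 0 := by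
  simp [beta, fsingle, Finsupp.lsum_single, LinearMap.toSpanSingleton_apply]

lemma alpha_fsingle (k : ℕ) (R S : Finset ℕ) :
    alpha k (fsingle (R, S)) =
      if k ∈ S then 0 else
        (((-1 : ℂ) ^ R.card) * ((-1 : ℂ) ^ (S.filter (· < k)).card)) •
          fsingle (R, insert k S) := by
  simp [alpha, fsingle, Finsupp.lsum_single, LinearMap.toSpanSingleton_apply]

lemma tau_fsingle (R S : Finset ℕ) :
    tau (fsingle (R, S)) =
      ∑ l ∈ S \ R, tc R S l • fsingle (insert l R, S.erase l) := by
  simp [tau, fsingle, Finsupp.lsum_single, LinearMap.toSpanSingleton_apply]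

lemma omega_fsingle (R S : Finset ℕ) :
    omega (fsingle (R, S)) = ∑ k ∈ R \ S, oc R S k • fsingle (R.erase k, insert k S) := by
  have h0 : omega (fsingle (R, S)) = ∑ k ∈ R, alpha k (beta k (fsingle (R, S))) := by
    simp [_root_.omega, fsingle, Finsupp.lsum_single, LinearMap.toSpanSingleton_apply]
  rw [h0, Finset.sdiff_eq_filter, Finset.sum_filter]
  refine Finset.sum_congr rfl fun k hk => ?_
  rw [beta_fsingle, if_pos hk, map_smul, alpha_fsingle]
  by_cases hkS : k ∈ S
  · rw [if_pos hkS, smul_zero, if_neg (not_not_intro hkS)]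
  · rw [if_neg hkS, if_pos hkS, smul_smul]
    rfl

lemma sq_one (a b c : ℕ) :
    ((-1 : ℂ) ^ a * ((-1) ^ b * (-1) ^ c)) * ((-1 : ℂ) ^ a * ((-1) ^ b * (-1) ^ c)) = 1 := by
  have h : ∀ n : ℕ, ((-1 : ℂ) ^ n) * ((-1 : ℂ) ^ n) = 1 := fun n => by
    rw [← mul_pow]; norm_num
  calc ((-1 : ℂ) ^ a * ((-1) ^ b * (-1) ^ c)) * ((-1 : ℂ) ^ a * ((-1) ^ b * (-1) ^ c))
      = ((-1 : ℂ) ^ a * (-1) ^ a) * (((-1 : ℂ) ^ b * (-1) ^ b) * ((-1 : ℂ) ^ c * (-1) ^ c)) := by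
        ring
    _ = 1 := by rw [h, h, h]; norm_num

lemma filter_erase_lt (R : Finset ℕ) (k : ℕ) :
    (R.erase k).filter (· < k) = R.filter (· < k) := by
  ext a
  by_cases hak : a = k <;> simp [hak, lt_irrefl, Finset.mem_erase, Finset.mem_filter]

lemma filter_insert_lt (S : Finset ℕ) (k : ℕ) :
    (insert k S).filter (· < k) = S.filter (· < k) := by
  rw [Finset.filter_insert, if_neg (lt_irrefl k)]

lemma diag1 (R S : Finset ℕ) (k : ℕ) (hkR : k ∈ R) (hkS : k ∉ S) :
    oc R S k * tc (R.erase k) (insert k S) k = 1 := by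
  unfold oc tc
  rw [filter_erase_lt, filter_insert_lt]
  exact sq_one _ _ _

lemma diag2 (R S : Finset ℕ) (l : ℕ) (hlS : l ∈ S) (hlR : l ∉ R) :
    tc R S l * oc (insert l R) (S.erase l) l = 1 := by
  unfold oc tc
  rw [filter_insert_lt, filter_erase_lt, Finset.erase_insert hlR]
  exact sq_one _ _ _

lemma sdiff_insert_erase (A B : Finset ℕ) (a : ℕ) :
    (insert a A) \ (B.erase a) = insert a (A \ B) := by
  ext c
  by_cases hca : c = a <;>
    simp [hca, Finset.mem_sdiff, Finset.mem_insert, Finset.mem_erase]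

lemma card_filter_insert (p : ℕ → Prop) [DecidablePred p] {a : ℕ} {s : Finset ℕ}
    (h : a ∉ s) :
    ((insert a s).filter p).card = (if p a then 1 else 0) + (s.filter p).card := by
  rw [Finset.filter_insert]
  split_ifs with hp
  · rw [Finset.card_insert_of_notMem fun hm => h (Finset.mem_filter.mp hm).1, Nat.add_comm]
  · simp

lemma coef_eq' (R' S' : Finset ℕ) (k l : ℕ) (hk : k ∉ R') (hl : l ∉ S')
    (hkS : k ∉ insert l S') (hlR : l ∉ insert k R') :
    oc (insert k R') (insert l S') k * tc R' (insert k (insert l S')) l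
      = tc (insert k R') (insert l S') l * oc (insert l (insert k R')) S' k := by
  have hlk : l ≠ k := fun h => hlR (h ▸ Finset.mem_insert_self k R')
  have hlR' : l ∉ R' := fun h => hlR (Finset.mem_insert_of_mem h)
  unfold oc tc
  rw [Finset.erase_insert_of_ne hlk, Finset.erase_insert hk]
  simp only [card_filter_insert _ hk, card_filter_insert _ hl, card_filter_insert _ hkS,
    card_filter_insert _ hlR, Finset.card_insert_of_notMem hk,
    Finset.card_insert_of_notMem hlR']
  simp only [if_neg (lt_irrefl k), if_neg (lt_irrefl l), Nat.zero_add, Nat.add_zero]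
  simp only [pow_add]
  ring

lemma key (x : FockIdx) :
    tau (omega (fsingle x)) = omega (tau (fsingle x)) + (charge x : ℂ) • fsingle x := by
  obtain ⟨R, S⟩ := x
  have hL : tau (omega (fsingle (R, S))) =
      (R \ S).card • fsingle (R, S) +
        ∑ k ∈ R \ S, ∑ l ∈ S \ R,
          (oc R S k * tc (R.erase k) (insert k S) l) •
            fsingle (insert l (R.erase k), insert k (S.erase l)) := by
    rw [omega_fsingle, map_sum]
    have step : ∀ k ∈ R \ S,
        tau (oc R S k • fsingle (R.erase k, insert k S)) =
          fsingle (R, S) + ∑ l ∈ S \ R,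
            (oc R S k * tc (R.erase k) (insert k S) l) •
              fsingle (insert l (R.erase k), insert k (S.erase l)) := by
      intro k hk
      obtain ⟨hkR, hkS⟩ := Finset.mem_sdiff.mp hk
      rw [map_smul, tau_fsingle, sdiff_insert_erase,
        Finset.sum_insert (by simp [Finset.mem_sdiff, hkR]),
        smul_add, smul_smul, Finset.smul_sum]
      congr 1
      · rw [Finset.insert_erase hkR, Finset.erase_insert hkS, diag1 R S k hkR hkS, one_smul]
      · refine Finset.sum_congr rfl fun l hl => ?_
        obtain ⟨hlS, hlR⟩ := Finset.mem_sdiff.mp hl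
        have hkl : k ≠ l := fun h => hkS (h ▸ hlS)
        rw [smul_smul, Finset.erase_insert_of_ne hkl]
    rw [Finset.sum_congr rfl step, Finset.sum_add_distrib, Finset.sum_const]
  have hR : omega (tau (fsingle (R, S))) =
      (S \ R).card • fsingle (R, S) +
        ∑ l ∈ S \ R, ∑ k ∈ R \ S,
          (tc R S l * oc (insert l R) (S.erase l) k) •
            fsingle (insert l (R.erase k), insert k (S.erase l)) := by
    rw [tau_fsingle, map_sum]
    have step : ∀ l ∈ S \ R,
        omega (tc R S l • fsingle (insert l R, S.erase l)) =
          fsingle (R, S) + ∑ k ∈ R \ S,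
            (tc R S l * oc (insert l R) (S.erase l) k) •
              fsingle (insert l (R.erase k), insert k (S.erase l)) := by
      intro l hl
      obtain ⟨hlS, hlR⟩ := Finset.mem_sdiff.mp hl
      rw [map_smul, omega_fsingle, sdiff_insert_erase,
        Finset.sum_insert (by simp [Finset.mem_sdiff, hlS]),
        smul_add, smul_smul, Finset.smul_sum]
      congr 1
      · rw [Finset.erase_insert hlR, Finset.insert_erase hlS, diag2 R S l hlS hlR, one_smul]
      · refine Finset.sum_congr rfl fun k hk => ?_
        obtain ⟨hkR, hkS⟩ := Finset.mem_sdiff.mp hk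
        have hlk : l ≠ k := fun h => hkS (h ▸ hlS)
        rw [smul_smul, Finset.erase_insert_of_ne hlk]
    rw [Finset.sum_congr rfl step, Finset.sum_add_distrib, Finset.sum_const]
  have hD : (∑ k ∈ R \ S, ∑ l ∈ S \ R,
        (oc R S k * tc (R.erase k) (insert k S) l) •
          fsingle (insert l (R.erase k), insert k (S.erase l)))
      = ∑ l ∈ S \ R, ∑ k ∈ R \ S,
          (tc R S l * oc (insert l R) (S.erase l) k) •
            fsingle (insert l (R.erase k), insert k (S.erase l)) := by
    rw [Finset.sum_comm]
    refine Finset.sum_congr rfl fun l hl => Finset.sum_congr rfl fun k hk => ?_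
    obtain ⟨hlS, hlR⟩ := Finset.mem_sdiff.mp hl
    obtain ⟨hkR, hkS⟩ := Finset.mem_sdiff.mp hk
    have hkl : k ≠ l := fun h => hkS (h ▸ hlS)
    have hc := coef_eq' (R.erase k) (S.erase l) k l (Finset.notMem_erase k R)
      (Finset.notMem_erase l S)
      (by simp [Finset.mem_insert, hkl, Finset.mem_erase, hkS])
      (by simp [Finset.mem_insert, hkl.symm, Finset.mem_erase, hlR])
    rw [Finset.insert_erase hkR, Finset.insert_erase hlS] at hc
    rw [hc]
  rw [hL, hR, hD]
  have h2 : ((R \ S).card : ℤ) = (S \ R).card + charge (R, S) := by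
    have e1 := Finset.card_sdiff_add_card_inter R S
    have e2 := Finset.card_sdiff_add_card_inter S R
    rw [Finset.inter_comm S R] at e2
    simp only [charge]
    omega
  have h1 : (((R \ S).card : ℕ) : ℂ) = (((S \ R).card : ℕ) : ℂ) + (charge (R, S) : ℂ) := by
    exact_mod_cast h2
  rw [← Nat.cast_smul_eq_nsmul ℂ (R \ S).card, ← Nat.cast_smul_eq_nsmul ℂ (S \ R).card,
    h1, add_smul]
  abel

lemma comm_apply (v : Fock) :
    tau (omega v) = omega (tau v) + chargeOp v := by
  have h : tau ∘ₗ omega = omega ∘ₗ tau + chargeOp := by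
    apply Finsupp.lhom_ext
    intro x c
    have hs : (Finsupp.single x c : Fock) = c • fsingle x := by
      simp [fsingle, Finsupp.smul_single]
    rw [hs]
    simp only [LinearMap.comp_apply, LinearMap.add_apply, map_smul]
    have hco : chargeOp (fsingle x) = (charge x : ℂ) • fsingle x := by
      simp [chargeOp, fsingle, Finsupp.lsum_single, LinearMap.toSpanSingleton_apply]
    rw [key x, hco, smul_add]
  exact LinearMap.congr_fun h v

lemma chargeOp_eq (c : ℤ) (v : Fock) (hv : v ∈ FockC c) :
    chargeOp v = (c : ℂ) • v := by
  have hsup : ∀ x ∈ v.support, charge x = c := by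
    rw [FockC, Finsupp.mem_supported] at hv
    exact fun x hx => hv hx
  have h0 : chargeOp v = v.sum fun x r => r • ((charge x : ℂ) • fsingle x) := by
    rw [chargeOp, Finsupp.lsum_apply]
    rfl
  rw [h0]
  have h1 : (v.sum fun x r => r • ((charge x : ℂ) • fsingle x))
      = v.sum fun x r => (c : ℂ) • Finsupp.single x r := by
    apply Finsupp.sum_congr
    intro x hx
    rw [hsup x hx]
    simp [fsingle, Finsupp.smul_single, smul_smul, mul_comm]
  rw [h1, ← Finsupp.smul_sum, Finsupp.sum_single]

lemma map_mem_of (L : Fock →ₗ[ℂ] Fock) (c d : ℤ)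
    (h : ∀ x : FockIdx, charge x = c → L (fsingle x) ∈ FockC d) :
    ∀ v ∈ FockC c, L v ∈ FockC d := by
  intro v hv
  have hle : FockC c ≤ Submodule.comap L (FockC d) := by
    rw [FockC, Finsupp.supported_eq_span_single, Submodule.span_le]
    rintro _ ⟨x, hx, rfl⟩
    exact h x hx
  exact hle hv

lemma tau_mem (c : ℤ) (v : Fock) (hv : v ∈ FockC c) : tau v ∈ FockC (c + 2) := by
  refine map_mem_of tau c (c + 2) (fun x hx => ?_) v hv
  obtain ⟨R, S⟩ := x
  rw [tau_fsingle]
  apply Submodule.sum_mem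
  intro l hl
  obtain ⟨hlS, hlR⟩ := Finset.mem_sdiff.mp hl
  apply Submodule.smul_mem
  apply Finsupp.single_mem_supported
  show charge (insert l R, S.erase l) = c + 2
  have h1 : 1 ≤ S.card := Finset.card_pos.mpr ⟨l, hlS⟩
  simp only [charge, Finset.card_insert_of_notMem hlR, Finset.card_erase_of_mem hlS]
  simp only [charge] at hx
  omega

lemma tau_support_card {v : Fock} {x : FockIdx} (hx : x ∈ (tau v).support) :
    ∃ y ∈ v.support, x.2.card + 1 = y.2.card := by
  have h0 : tau v = v.sum fun y r =>
      r • (∑ l ∈ y.2 \ y.1, tc y.1 y.2 l • fsingle (insert l y.1, y.2.erase l)) := by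
    rw [tau, Finsupp.lsum_apply]
    rfl
  rw [h0] at hx
  obtain ⟨y, hy, hmem⟩ := Finset.mem_biUnion.mp (Finsupp.support_sum hx)
  refine ⟨y, hy, ?_⟩
  have h3 : x ∈ (∑ l ∈ y.2 \ y.1,
      tc y.1 y.2 l • fsingle (insert l y.1, y.2.erase l)).support :=
    Finsupp.support_smul hmem
  obtain ⟨l, hl, hx2⟩ := Finset.mem_biUnion.mp (Finsupp.support_finset_sum h3)
  obtain ⟨hlS, hlR⟩ := Finset.mem_sdiff.mp hl
  have hx3 : x ∈ (fsingle (insert l y.1, y.2.erase l)).support := Finsupp.support_smul hx2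
  have hx4 : x = (insert l y.1, y.2.erase l) := by
    have := Finsupp.support_single_subset hx3
    simpa using this
  rw [hx4]
  exact Finset.card_erase_add_one hlS

lemma tau_pow_zero : ∀ (n : ℕ) (v : Fock), (∀ x ∈ v.support, x.2.card < n) →
    (tau ^ n) v = 0 := by
  intro n
  induction n with
  | zero =>
    intro v hv
    have hv0 : v = 0 := by
      ext x
      by_contra h
      exact absurd (hv x (Finsupp.mem_support_iff.mpr h)) (Nat.not_lt_zero _)
    simp [hv0]
  | succ n ih =>
    intro v hv
    rw [pow_succ, Module.End.mul_apply]
    apply ih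
    intro x hx
    obtain ⟨y, hy, hcard⟩ := tau_support_card hx
    have := hv y hy
    omega

end OmegaAux

open OmegaAux in
/-- For every integer `m ≥ 1`, the map `ω : F_m → F_{m-2}` is injective. -/
theorem omega_injective (m : ℤ) (hm : 1 ≤ m) :
    ∀ v ∈ FockC m, omega v = 0 → v = 0 := by
  intro v hv hov
  have hmem : ∀ n : ℕ, (tau ^ n) v ∈ FockC (m + 2 * n) := by
    intro n
    induction n with
    | zero => simpa using hv
    | succ n ih =>
      have he : m + 2 * ((n + 1 : ℕ) : ℤ) = (m + 2 * n) + 2 := by push_cast; ring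
      rw [he, pow_succ', Module.End.mul_apply]
      exact tau_mem _ _ ih
  have hkey : ∀ n : ℕ, omega ((tau ^ (n + 1)) v)
      = (-(((n : ℂ) + 1) * ((m : ℂ) + n))) • (tau ^ n) v := by
    intro n
    induction n with
    | zero =>
      have hc := comm_apply v
      rw [hov, map_zero, chargeOp_eq m v hv] at hc
      have h1 : omega (tau v) = -((m : ℂ) • v) := eq_neg_of_add_eq_zero_left hc.symm
      simp only [zero_add, pow_one, pow_zero, Module.End.one_apply, Nat.cast_zero]
      rw [h1]
      simp [neg_smul]
    | succ n ih =>
      have hw : (tau ^ (n + 1 + 1)) v = tau ((tau ^ (n + 1)) v) := by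
        rw [pow_succ', Module.End.mul_apply]
      rw [hw]
      have hcm := comm_apply ((tau ^ (n + 1)) v)
      have h1 : omega (tau ((tau ^ (n + 1)) v))
          = tau (omega ((tau ^ (n + 1)) v)) - chargeOp ((tau ^ (n + 1)) v) :=
        eq_sub_of_add_eq hcm.symm
      rw [h1, ih, map_smul, chargeOp_eq _ _ (hmem (n + 1))]
      have hw2 : tau ((tau ^ n) v) = (tau ^ (n + 1)) v := by
        rw [pow_succ', Module.End.mul_apply]
      rw [hw2, ← sub_smul]
      congr 1
      push_cast
      ring
  have hnil : ∃ N, (tau ^ N) v = 0 :=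
    ⟨(v.support.sup fun x => x.2.card) + 1,
      tau_pow_zero _ v fun x hx => Nat.lt_succ_of_le (Finset.le_sup (f := fun x => x.2.card) hx)⟩
  have hdesc : ∀ N, (tau ^ N) v = 0 → v = 0 := by
    intro N
    induction N with
    | zero => intro h; simpa using h
    | succ n ih =>
      intro h
      have hk := hkey n
      rw [h, map_zero] at hk
      have hcoef : (-(((n : ℂ) + 1) * ((m : ℂ) + n))) ≠ 0 := by
        have h1 : ((n : ℂ) + 1) ≠ 0 := Nat.cast_add_one_ne_zero n
        have h2 : ((m : ℂ) + n) ≠ 0 := by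
          have h3 : ((m + n : ℤ) : ℂ) ≠ 0 := Int.cast_ne_zero.mpr (by omega)
          push_cast at h3
          exact h3
        exact neg_ne_zero.mpr (mul_ne_zero h1 h2)
      exact ih ((smul_eq_zero.mp hk.symm).resolve_left hcoef)
  obtain ⟨N, hN⟩ := hnil
  exact hdesc N hN

end
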